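/- arXiv:1406.2626 — 2 statements merged into one kernel-verified Lean document; each statement's English description precedes it below -/
import Mathlib

section
/- Let w be a Galerkin solution. Then sup_{s ≥ −k₀} ‖w(s,·)‖ ≤ ‖f‖/γ + (μ/γ)^{1/2} |v|_X. -/
open MeasureTheory Finset
set_option linter.unusedSectionVars false

/-- The `L²` norm `(∫₀^L ‖g x‖² dx)^{1/2}` of a function on the circle `AddCircle L`
(recall that the standard measure on `AddCircle L` has total mass `L`). -/
noncomputable def l2norm (L : ℝ) [Fact (0 < L)] (g : AddCircle L → ℂ) : ℝ :=
  Real.sqrt (∫ x : AddCircle L, ‖g x‖ ^ 2)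

/-- The trigonometric polynomial `x ↦ ∑_{|k| ≤ N} c k · e^{2πikx/L}` on `AddCircle L`. -/
noncomputable def trigSum (L : ℝ) (N : ℕ) (c : ℤ → ℂ) : AddCircle L → ℂ :=
  fun x => ∑ k ∈ Finset.Icc (-(N : ℤ)) (N : ℤ), c k * fourier k x

/-- The low-mode Fourier projection `P_N g = ∑_{|k| ≤ N} ĝ(k) e^{2πikx/L}`. -/
noncomputable def lowProj (L : ℝ) [Fact (0 < L)] (N : ℕ) (g : AddCircle L → ℂ) :
    AddCircle L → ℂ :=
  trigSum L N (fun k => fourierCoeff g k)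


section AuxLemmas

open ComplexConjugate

variable {L : ℝ} [hL : Fact (0 < L)]

lemma conj_mul_self (z : ℂ) : conj z * z = ((‖z‖^2 : ℝ) : ℂ) := by
  rw [mul_comm, Complex.mul_conj]
  norm_cast
  rw [Complex.normSq_eq_norm_sq]

lemma trigSum_continuous (N : ℕ) (c : ℤ → ℂ) : Continuous (trigSum L N c) :=
  continuous_finset_sum _ fun k _ => continuous_const.mul (fourier k).continuous

lemma cont_integrable (g : AddCircle L → ℂ) (hg : Continuous g) :
    Integrable g (AddCircle.haarAddCircle (T := L)) :=
  hg.integrable_of_hasCompactSupport (HasCompactSupport.of_compactSpace _)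

/-- Pairing: `∫ conj (trigSum c) * h = ∑ conj (c k) * fourierCoeff h k`. -/
lemma pairing (N : ℕ) (c : ℤ → ℂ) (h : AddCircle L → ℂ) (hh : Continuous h) :
    ∫ x, conj (trigSum L N c x) * h x ∂(AddCircle.haarAddCircle (T := L))
      = ∑ k ∈ Finset.Icc (-(N : ℤ)) (N : ℤ), conj (c k) * fourierCoeff h k := by
  have key : ∀ x : AddCircle L, conj (trigSum L N c x) * h x
      = ∑ k ∈ Finset.Icc (-(N : ℤ)) (N : ℤ), conj (c k) * (fourier (-k) x * h x) := by
    intro x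
    rw [trigSum, map_sum, Finset.sum_mul]
    refine Finset.sum_congr rfl fun k _ => ?_
    rw [map_mul, ← fourier_neg]
    ring
  simp_rw [key]
  rw [integral_finset_sum]
  · refine Finset.sum_congr rfl fun k _ => ?_
    rw [MeasureTheory.integral_const_mul, fourierCoeff]
    simp_rw [smul_eq_mul]
  · intro k _
    exact (cont_integrable _ ((fourier (-k)).continuous.mul hh)).const_mul _

lemma fourierCoeff_trigSum (N : ℕ) (c : ℤ → ℂ) (j : ℤ) :
    fourierCoeff (trigSum L N c) j
      = if j ∈ Finset.Icc (-(N : ℤ)) (N : ℤ) then c j else 0 := by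
  have h := orthonormal_fourier (T := L)
  rw [orthonormal_iff_ite] at h
  have key : ∀ k, fourierCoeff (fun x : AddCircle L => c k * fourier k x) j
      = c k * (if j = k then 1 else 0) := by
    intro k
    rw [fourierCoeff.const_mul]
    congr 1
    have h2 := h j k
    rw [ContinuousMap.inner_toLp (AddCircle.haarAddCircle (T := L)) (fourier j) (fourier k)] at h2
    rw [fourierCoeff]
    simp_rw [smul_eq_mul]
    rw [← h2]
    apply integral_congr_ae
    filter_upwards with x
    simp [← fourier_neg, RCLike.inner_apply]
    ring
  have lin : fourierCoeff (trigSum L N c) j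
      = ∑ k ∈ Finset.Icc (-(N : ℤ)) (N : ℤ),
          fourierCoeff (fun x : AddCircle L => c k * fourier k x) j := by
    rw [fourierCoeff]
    simp_rw [trigSum, smul_eq_mul, Finset.mul_sum]
    rw [integral_finset_sum]
    · refine Finset.sum_congr rfl fun k _ => ?_
      rw [fourierCoeff]; simp_rw [smul_eq_mul]
    · intro k _
      exact cont_integrable _ ((fourier (-j)).continuous.mul
        (continuous_const.mul (fourier k).continuous))
  rw [lin]
  simp_rw [key, mul_ite, mul_one, mul_zero]
  simp_rw [eq_comm (a := j)]
  rw [Finset.sum_ite_eq' (Finset.Icc (-(N : ℤ)) (N : ℤ)) j c]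

lemma integral_haar_sq (N : ℕ) (c : ℤ → ℂ) :
    ∫ x, ‖trigSum L N c x‖ ^ 2 ∂(AddCircle.haarAddCircle (T := L))
      = ∑ k ∈ Finset.Icc (-(N : ℤ)) (N : ℤ), ‖c k‖ ^ 2 := by
  have h1 : ((∫ x, ‖trigSum L N c x‖ ^ 2 ∂(AddCircle.haarAddCircle (T := L)) : ℝ) : ℂ)
      = ∫ x, ((‖trigSum L N c x‖ ^ 2 : ℝ) : ℂ) ∂(AddCircle.haarAddCircle (T := L)) :=
    (integral_ofReal).symm
  have h2 : ∀ x : AddCircle L, ((‖trigSum L N c x‖ ^ 2 : ℝ) : ℂ)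
      = conj (trigSum L N c x) * trigSum L N c x := by
    intro x
    rw [conj_mul_self]
  have h3 := pairing N c (trigSum L N c) (trigSum_continuous N c)
  simp_rw [h2] at h1
  rw [h3] at h1
  have h4 : ∑ k ∈ Finset.Icc (-(N : ℤ)) (N : ℤ), conj (c k) * fourierCoeff (trigSum L N c) k
      = ((∑ k ∈ Finset.Icc (-(N : ℤ)) (N : ℤ), ‖c k‖ ^ 2 : ℝ) : ℂ) := by
    push_cast
    refine Finset.sum_congr rfl fun k hk => ?_
    rw [fourierCoeff_trigSum, if_pos hk, conj_mul_self]
    norm_cast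
  rw [h4] at h1
  exact_mod_cast h1

lemma l2norm_trigSum (N : ℕ) (c : ℤ → ℂ) :
    l2norm L (trigSum L N c)
      = Real.sqrt L * Real.sqrt (∑ k ∈ Finset.Icc (-(N : ℤ)) (N : ℤ), ‖c k‖ ^ 2) := by
  rw [l2norm, ← Real.sqrt_mul hL.out.le]
  congr 1
  rw [AddCircle.volume_eq_smul_haarAddCircle, integral_smul_measure,
    ENNReal.toReal_ofReal hL.out.le, integral_haar_sq, smul_eq_mul]

lemma memLp_haar {f : AddCircle L → ℂ} (hf : MeasureTheory.MemLp f 2 MeasureTheory.volume) :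
    MeasureTheory.MemLp f 2 (AddCircle.haarAddCircle (T := L)) := by
  have h : (AddCircle.haarAddCircle (T := L))
      = (ENNReal.ofReal L)⁻¹ • (MeasureTheory.volume : Measure (AddCircle L)) := by
    rw [AddCircle.volume_eq_smul_haarAddCircle, smul_smul,
      ENNReal.inv_mul_cancel (by simpa using hL.out) ENNReal.ofReal_ne_top, one_smul]
  rw [h]
  exact hf.smul_measure (by simpa using hL.out)

lemma bessel (f : AddCircle L → ℂ) (hf : MeasureTheory.MemLp f 2 MeasureTheory.volume) (N : ℕ) :
    ∑ k ∈ Finset.Icc (-(N : ℤ)) (N : ℤ), ‖fourierCoeff f k‖ ^ 2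
      ≤ (∫ x : AddCircle L, ‖f x‖ ^ 2) / L := by
  have hμ : MeasureTheory.MemLp f 2 (AddCircle.haarAddCircle (T := L)) := memLp_haar hf
  set F2 := hμ.toLp f with hF2
  have hae : (F2 : AddCircle L → ℂ) =ᵐ[AddCircle.haarAddCircle (T := L)] f := hμ.coeFn_toLp
  have hb := (fourierBasis (T := L)).orthonormal.sum_inner_products_le
    (s := Finset.Icc (-(N : ℤ)) (N : ℤ)) F2
  have hcoeff : ∀ k : ℤ, (inner (𝕜 := ℂ) ((fourierBasis (T := L)) k) F2 : ℂ)
      = fourierCoeff f k := by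
    intro k
    rw [← HilbertBasis.repr_apply_apply, fourierBasis_repr]
    apply integral_congr_ae
    filter_upwards [hae] with x hx
    rw [hx]
  simp_rw [hcoeff] at hb
  have hnorm : ‖F2‖ ^ 2 = ∫ x, ‖f x‖ ^ 2 ∂(AddCircle.haarAddCircle (T := L)) := by
    have h1 : (inner ℂ F2 F2 : ℂ)
        = ∫ x, conj ((F2 : AddCircle L → ℂ) x) * (F2 : AddCircle L → ℂ) x
          ∂(AddCircle.haarAddCircle (T := L)) := by
      rw [MeasureTheory.L2.inner_def]
      simp [RCLike.inner_apply, conj_mul_self]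
    have h2 : (inner ℂ F2 F2 : ℂ)
        = ((∫ x, ‖f x‖ ^ 2 ∂(AddCircle.haarAddCircle (T := L)) : ℝ) : ℂ) := by
      have hof : ∫ x, ((‖f x‖ ^ 2 : ℝ) : ℂ) ∂(AddCircle.haarAddCircle (T := L))
          = ((∫ x, ‖f x‖ ^ 2 ∂(AddCircle.haarAddCircle (T := L)) : ℝ) : ℂ) := integral_ofReal
      rw [h1, ← hof]
      apply integral_congr_ae
      filter_upwards [hae] with x hx
      rw [hx, conj_mul_self]
    have h3 := InnerProductSpace.norm_sq_eq_re_inner (𝕜 := ℂ) F2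
    rw [h3, h2]
    simp
  have hint : ∫ x, ‖f x‖ ^ 2 ∂(AddCircle.haarAddCircle (T := L))
      = (∫ x : AddCircle L, ‖f x‖ ^ 2) / L := by
    rw [AddCircle.volume_eq_smul_haarAddCircle, integral_smul_measure,
      ENNReal.toReal_ofReal hL.out.le, smul_eq_mul,
      mul_comm, mul_div_assoc, div_self hL.out.ne', mul_one]
  rw [hnorm, hint] at hb
  exact hb

end AuxLemmas

/-- A Galerkin solution of the feedback-controlled damped driven NLS:
`w(s,x) = ∑_{|k| ≤ n} a_k(s) e^{2πikx/L}` with differentiable coefficients on `[-k₀, ∞)`,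
satisfying `i ∂ₛ w + ∂ₓ² w + P_n(|w|² w) + iγ w = P_n f - iμ (P_m w - v(s))`
with `w(-k₀, ·) = 0`, where the datum `v(s) = ∑_{|k| ≤ m} (vc k s) e^{2πikx/L}` is a
continuously differentiable map into trigonometric polynomials of degree ≤ m with
finite `X`-norm `sup_s ‖v(s)‖ + sup_s ‖∂ₛ v(s)‖`. -/
structure GalerkinSolution (L : ℝ) [Fact (0 < L)] where
  /-- damping parameter -/
  γ : ℝ
  /-- feedback (relaxation) parameter -/
  μ : ℝ
  hγ : 0 < γ
  hμ : 0 < μ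
  /-- number of observed low modes -/
  m : ℕ
  /-- Galerkin truncation level -/
  n : ℕ
  hmn : m ≤ n
  /-- the forcing term, in `L²(AddCircle L)` -/
  f : AddCircle L → ℂ
  hf : MeasureTheory.MemLp f 2 MeasureTheory.volume
  /-- the initial time is `-k₀` -/
  k₀ : ℝ
  /-- the Fourier coefficients of the datum `v` -/
  vc : ℤ → ℝ → ℂ
  hvc : ∀ k : ℤ, ContDiff ℝ 1 (vc k)
  /-- `|v|_X < ∞` -/
  hvX : ∃ C : ℝ, ∀ s : ℝ,
    l2norm L (trigSum L m (fun k => vc k s))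
      + l2norm L (trigSum L m (fun k => deriv (vc k) s)) ≤ C
  /-- the coefficients of the Galerkin solution -/
  a : ℤ → ℝ → ℂ
  /-- the time derivatives of the coefficients -/
  a' : ℤ → ℝ → ℂ
  ha : ∀ (k : ℤ) (s : ℝ), -k₀ ≤ s → HasDerivWithinAt (a k) (a' k s) (Set.Ici (-k₀)) s
  hinit : ∀ k : ℤ, a k (-k₀) = 0
  heq : ∀ (s : ℝ), -k₀ ≤ s → ∀ x : AddCircle L,
    Complex.I * trigSum L n (fun k => a' k s) x
      + trigSum L n (fun k => Complex.ofReal (-((2 * Real.pi * (k : ℝ) / L) ^ 2)) * a k s) x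
      + lowProj L n (fun y => Complex.ofReal (‖trigSum L n (fun k => a k s) y‖ ^ 2)
          * trigSum L n (fun k => a k s) y) x
      + Complex.I * (γ : ℂ) * trigSum L n (fun k => a k s) x
      = lowProj L n f x
        - Complex.I * (μ : ℂ) * (lowProj L m (trigSum L n (fun k => a k s)) x
            - trigSum L m (fun k => vc k s) x)

namespace GalerkinSolution

variable {L : ℝ} [Fact (0 < L)]

/-- the solution `w(s, ·)` -/
noncomputable def w (G : GalerkinSolution L) (s : ℝ) : AddCircle L → ℂ :=
  trigSum L G.n (fun k => G.a k s)

/-- the time derivative `∂ₛ w(s, ·)` -/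
noncomputable def ws (G : GalerkinSolution L) (s : ℝ) : AddCircle L → ℂ :=
  trigSum L G.n (fun k => G.a' k s)

/-- the spatial derivative `∂ₓ w(s, ·)` -/
noncomputable def wx (G : GalerkinSolution L) (s : ℝ) : AddCircle L → ℂ :=
  trigSum L G.n (fun k => Complex.ofReal (2 * Real.pi * (k : ℝ) / L) * Complex.I * G.a k s)

/-- the second spatial derivative `∂ₓ² w(s, ·)` -/
noncomputable def wxx (G : GalerkinSolution L) (s : ℝ) : AddCircle L → ℂ :=
  trigSum L G.n (fun k => Complex.ofReal (-((2 * Real.pi * (k : ℝ) / L) ^ 2)) * G.a k s)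

/-- the datum `v(s)` -/
noncomputable def v (G : GalerkinSolution L) (s : ℝ) : AddCircle L → ℂ :=
  trigSum L G.m (fun k => G.vc k s)

/-- the time derivative `∂ₛ v(s)` of the datum -/
noncomputable def vs (G : GalerkinSolution L) (s : ℝ) : AddCircle L → ℂ :=
  trigSum L G.m (fun k => deriv (G.vc k) s)

/-- the norm `|v|_X = sup_s ‖v(s)‖ + sup_s ‖∂ₛ v(s)‖` of the datum -/
noncomputable def normX (G : GalerkinSolution L) : ℝ :=
  (⨆ s : ℝ, l2norm L (G.v s)) + ⨆ s : ℝ, l2norm L (G.vs s)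

end GalerkinSolution


section Energy

open ComplexConjugate

variable {L : ℝ} [hL : Fact (0 < L)]

lemma energy_identity (G : GalerkinSolution L) (s : ℝ) (hs : -G.k₀ ≤ s) :
    (∑ k ∈ Finset.Icc (-(G.n : ℤ)) (G.n : ℤ), conj (G.a k s) * G.a' k s).re
      = -G.γ * (∑ k ∈ Finset.Icc (-(G.n : ℤ)) (G.n : ℤ), ‖G.a k s‖ ^ 2)
        + (∑ k ∈ Finset.Icc (-(G.n : ℤ)) (G.n : ℤ), conj (G.a k s) * fourierCoeff G.f k).im
        - G.μ * (∑ k ∈ Finset.Icc (-(G.m : ℤ)) (G.m : ℤ), ‖G.a k s‖ ^ 2)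
        + G.μ * (∑ k ∈ Finset.Icc (-(G.m : ℤ)) (G.m : ℤ), conj (G.a k s) * G.vc k s).re := by
  classical
  set μh := AddCircle.haarAddCircle (T := L) with hμh
  set c : ℤ → ℂ := fun k => G.a k s with hc
  have hWc : Continuous (trigSum L G.n c) := trigSum_continuous G.n c
  have hconjW : Continuous fun x => conj (trigSum L G.n c x) := by
    exact (Complex.continuous_conj).comp hWc
  set h3 : AddCircle L → ℂ :=
    fun y => Complex.ofReal (‖trigSum L G.n c y‖ ^ 2) * trigSum L G.n c y with hh3
  have hh3c : Continuous h3 :=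
    (Complex.continuous_ofReal.comp ((hWc.norm).pow 2)).mul hWc
  have hsub : Finset.Icc (-(G.m : ℤ)) (G.m : ℤ) ⊆ Finset.Icc (-(G.n : ℤ)) (G.n : ℤ) := by
    apply Finset.Icc_subset_Icc <;> [skip; exact_mod_cast G.hmn]
    simp only [neg_le_neg_iff]
    exact_mod_cast G.hmn
  -- the six integrals
  have I1 : Integrable (fun x => conj (trigSum L G.n c x)
      * (Complex.I * trigSum L G.n (fun k => G.a' k s) x)) μh :=
    cont_integrable _ (hconjW.mul (continuous_const.mul (trigSum_continuous _ _)))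
  have I2 : Integrable (fun x => conj (trigSum L G.n c x)
      * trigSum L G.n (fun k => Complex.ofReal (-((2 * Real.pi * (k : ℝ) / L) ^ 2)) * G.a k s) x)
      μh := cont_integrable _ (hconjW.mul (trigSum_continuous _ _))
  have I3 : Integrable (fun x => conj (trigSum L G.n c x) * lowProj L G.n h3 x) μh :=
    cont_integrable _ (hconjW.mul (trigSum_continuous _ _))
  have I4 : Integrable (fun x => conj (trigSum L G.n c x)
      * (Complex.I * (G.γ : ℂ) * trigSum L G.n c x)) μh :=
    cont_integrable _ (hconjW.mul (continuous_const.mul hWc))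
  have I5 : Integrable (fun x => conj (trigSum L G.n c x) * lowProj L G.n G.f x) μh :=
    cont_integrable _ (hconjW.mul (trigSum_continuous _ _))
  have I6 : Integrable (fun x => conj (trigSum L G.n c x)
      * (Complex.I * (G.μ : ℂ) * (lowProj L G.m (trigSum L G.n c) x
          - trigSum L G.m (fun k => G.vc k s) x))) μh :=
    cont_integrable _ (hconjW.mul (continuous_const.mul
      ((trigSum_continuous _ _).sub (trigSum_continuous _ _))))
  -- the integrated equation
  have key : (∫ x, conj (trigSum L G.n c x)
        * (Complex.I * trigSum L G.n (fun k => G.a' k s) x) ∂μh)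
      + (∫ x, conj (trigSum L G.n c x)
        * trigSum L G.n (fun k => Complex.ofReal (-((2 * Real.pi * (k : ℝ) / L) ^ 2)) * G.a k s) x
          ∂μh)
      + (∫ x, conj (trigSum L G.n c x) * lowProj L G.n h3 x ∂μh)
      + (∫ x, conj (trigSum L G.n c x) * (Complex.I * (G.γ : ℂ) * trigSum L G.n c x) ∂μh)
      = (∫ x, conj (trigSum L G.n c x) * lowProj L G.n G.f x ∂μh)
        - ∫ x, conj (trigSum L G.n c x)
            * (Complex.I * (G.μ : ℂ) * (lowProj L G.m (trigSum L G.n c) x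
                - trigSum L G.m (fun k => G.vc k s) x)) ∂μh := by
    have I12 : Integrable (fun x => conj (trigSum L G.n c x)
        * (Complex.I * trigSum L G.n (fun k => G.a' k s) x)
        + conj (trigSum L G.n c x)
          * trigSum L G.n (fun k => Complex.ofReal (-((2 * Real.pi * (k : ℝ) / L) ^ 2))
              * G.a k s) x) μh := I1.add I2
    have I123 : Integrable (fun x => (conj (trigSum L G.n c x)
        * (Complex.I * trigSum L G.n (fun k => G.a' k s) x)
        + conj (trigSum L G.n c x)
          * trigSum L G.n (fun k => Complex.ofReal (-((2 * Real.pi * (k : ℝ) / L) ^ 2))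
              * G.a k s) x)
        + conj (trigSum L G.n c x) * lowProj L G.n h3 x) μh := I12.add I3
    rw [← integral_add I1 I2, ← integral_add I12 I3,
      ← integral_add I123 I4, ← integral_sub I5 I6]
    apply integral_congr_ae
    filter_upwards with x
    have hx := G.heq s hs x
    calc conj (trigSum L G.n c x) * (Complex.I * trigSum L G.n (fun k => G.a' k s) x)
          + conj (trigSum L G.n c x)
            * trigSum L G.n (fun k => Complex.ofReal (-((2 * Real.pi * (k : ℝ) / L) ^ 2))
                * G.a k s) x
          + conj (trigSum L G.n c x) * lowProj L G.n h3 x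
          + conj (trigSum L G.n c x) * (Complex.I * (G.γ : ℂ) * trigSum L G.n c x)
        = conj (trigSum L G.n c x)
            * (Complex.I * trigSum L G.n (fun k => G.a' k s) x
              + trigSum L G.n (fun k => Complex.ofReal (-((2 * Real.pi * (k : ℝ) / L) ^ 2))
                  * G.a k s) x
              + lowProj L G.n h3 x
              + Complex.I * (G.γ : ℂ) * trigSum L G.n c x) := by ring
      _ = conj (trigSum L G.n c x)
            * (lowProj L G.n G.f x
              - Complex.I * (G.μ : ℂ) * (lowProj L G.m (trigSum L G.n c) x
                  - trigSum L G.m (fun k => G.vc k s) x)) := by rw [hx]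
      _ = conj (trigSum L G.n c x) * lowProj L G.n G.f x
            - conj (trigSum L G.n c x)
              * (Complex.I * (G.μ : ℂ) * (lowProj L G.m (trigSum L G.n c) x
                  - trigSum L G.m (fun k => G.vc k s) x)) := by ring
  -- compute each of the six integrals
  have hΦ1 : (∫ x, conj (trigSum L G.n c x)
        * (Complex.I * trigSum L G.n (fun k => G.a' k s) x) ∂μh)
      = Complex.I * ∑ k ∈ Finset.Icc (-(G.n : ℤ)) (G.n : ℤ), conj (c k) * G.a' k s := by
    have : ∀ x, conj (trigSum L G.n c x) * (Complex.I * trigSum L G.n (fun k => G.a' k s) x)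
        = Complex.I * (conj (trigSum L G.n c x) * trigSum L G.n (fun k => G.a' k s) x) := by
      intro x; ring
    simp_rw [this]
    rw [MeasureTheory.integral_const_mul, pairing G.n c _ (trigSum_continuous _ _)]
    congr 1
    refine Finset.sum_congr rfl fun k hk => ?_
    rw [fourierCoeff_trigSum, if_pos hk]
  have hΦ2 : (∫ x, conj (trigSum L G.n c x)
        * trigSum L G.n (fun k => Complex.ofReal (-((2 * Real.pi * (k : ℝ) / L) ^ 2)) * G.a k s) x
          ∂μh)
      = ((∑ k ∈ Finset.Icc (-(G.n : ℤ)) (G.n : ℤ),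
          (-((2 * Real.pi * (k : ℝ) / L) ^ 2)) * ‖c k‖ ^ 2 : ℝ) : ℂ) := by
    rw [pairing G.n c _ (trigSum_continuous _ _), Complex.ofReal_sum]
    refine Finset.sum_congr rfl fun k hk => ?_
    rw [fourierCoeff_trigSum, if_pos hk]
    have : conj (c k) * (Complex.ofReal (-((2 * Real.pi * (k : ℝ) / L) ^ 2)) * G.a k s)
        = Complex.ofReal (-((2 * Real.pi * (k : ℝ) / L) ^ 2)) * (conj (c k) * c k) := by
      rw [hc]; ring
    rw [this, conj_mul_self]
    push_cast
    ring
  have hΦ3 : (∫ x, conj (trigSum L G.n c x) * lowProj L G.n h3 x ∂μh)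
      = ((∫ x, (‖trigSum L G.n c x‖ ^ 2) ^ 2 ∂μh : ℝ) : ℂ) := by
    rw [lowProj, pairing G.n c _ (trigSum_continuous _ _)]
    have step : ∑ k ∈ Finset.Icc (-(G.n : ℤ)) (G.n : ℤ),
          conj (c k) * fourierCoeff (trigSum L G.n fun k => fourierCoeff h3 k) k
        = ∑ k ∈ Finset.Icc (-(G.n : ℤ)) (G.n : ℤ), conj (c k) * fourierCoeff h3 k := by
      refine Finset.sum_congr rfl fun k hk => ?_
      rw [fourierCoeff_trigSum, if_pos hk]
    rw [step, ← pairing G.n c h3 hh3c]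
    have hof : ∫ x, (((‖trigSum L G.n c x‖ ^ 2) ^ 2 : ℝ) : ℂ) ∂μh
        = ((∫ x, (‖trigSum L G.n c x‖ ^ 2) ^ 2 ∂μh : ℝ) : ℂ) := integral_ofReal
    rw [← hof]
    apply integral_congr_ae
    filter_upwards with x
    have : conj (trigSum L G.n c x) * h3 x
        = Complex.ofReal (‖trigSum L G.n c x‖ ^ 2)
          * (conj (trigSum L G.n c x) * trigSum L G.n c x) := by
      rw [hh3]; ring
    rw [this, conj_mul_self]
    push_cast
    ring
  have hΦ4 : (∫ x, conj (trigSum L G.n c x) * (Complex.I * (G.γ : ℂ) * trigSum L G.n c x) ∂μh)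
      = Complex.I * (G.γ : ℂ)
        * ((∑ k ∈ Finset.Icc (-(G.n : ℤ)) (G.n : ℤ), ‖c k‖ ^ 2 : ℝ) : ℂ) := by
    have : ∀ x, conj (trigSum L G.n c x) * (Complex.I * (G.γ : ℂ) * trigSum L G.n c x)
        = Complex.I * (G.γ : ℂ) * (conj (trigSum L G.n c x) * trigSum L G.n c x) := by
      intro x; ring
    simp_rw [this]
    rw [MeasureTheory.integral_const_mul, pairing G.n c _ hWc]
    congr 1
    rw [Complex.ofReal_sum]
    refine Finset.sum_congr rfl fun k hk => ?_
    rw [fourierCoeff_trigSum, if_pos hk, conj_mul_self]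
  have hΦ5 : (∫ x, conj (trigSum L G.n c x) * lowProj L G.n G.f x ∂μh)
      = ∑ k ∈ Finset.Icc (-(G.n : ℤ)) (G.n : ℤ), conj (c k) * fourierCoeff G.f k := by
    rw [lowProj, pairing G.n c _ (trigSum_continuous _ _)]
    refine Finset.sum_congr rfl fun k hk => ?_
    rw [fourierCoeff_trigSum, if_pos hk]
  have hΦ6 : (∫ x, conj (trigSum L G.n c x)
        * (Complex.I * (G.μ : ℂ) * (lowProj L G.m (trigSum L G.n c) x
            - trigSum L G.m (fun k => G.vc k s) x)) ∂μh)
      = Complex.I * (G.μ : ℂ)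
        * (((∑ k ∈ Finset.Icc (-(G.m : ℤ)) (G.m : ℤ), ‖c k‖ ^ 2 : ℝ) : ℂ)
          - ∑ k ∈ Finset.Icc (-(G.m : ℤ)) (G.m : ℤ), conj (c k) * G.vc k s) := by
    have hsplit : ∀ x, conj (trigSum L G.n c x)
          * (Complex.I * (G.μ : ℂ) * (lowProj L G.m (trigSum L G.n c) x
              - trigSum L G.m (fun k => G.vc k s) x))
        = Complex.I * (G.μ : ℂ) * (conj (trigSum L G.n c x) * lowProj L G.m (trigSum L G.n c) x)
          - Complex.I * (G.μ : ℂ)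
            * (conj (trigSum L G.n c x) * trigSum L G.m (fun k => G.vc k s) x) := by
      intro x; ring
    simp_rw [hsplit]
    have J1 : Integrable (fun x => Complex.I * (G.μ : ℂ)
        * (conj (trigSum L G.n c x) * lowProj L G.m (trigSum L G.n c) x)) μh :=
      (cont_integrable _ (hconjW.mul (trigSum_continuous _ _))).const_mul _
    have J2 : Integrable (fun x => Complex.I * (G.μ : ℂ)
        * (conj (trigSum L G.n c x) * trigSum L G.m (fun k => G.vc k s) x)) μh :=
      (cont_integrable _ (hconjW.mul (trigSum_continuous _ _))).const_mul _
    have hlow : Continuous (lowProj L G.m (trigSum L G.n c)) := trigSum_continuous _ _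
    rw [integral_sub J1 J2,
      MeasureTheory.integral_const_mul, MeasureTheory.integral_const_mul,
      pairing G.n c (lowProj L G.m (trigSum L G.n c)) hlow,
      pairing G.n c (trigSum L G.m fun k => G.vc k s) (trigSum_continuous _ _)]
    have e1 : ∑ k ∈ Finset.Icc (-(G.n : ℤ)) (G.n : ℤ),
          conj (c k) * fourierCoeff (lowProj L G.m (trigSum L G.n c)) k
        = ((∑ k ∈ Finset.Icc (-(G.m : ℤ)) (G.m : ℤ), ‖c k‖ ^ 2 : ℝ) : ℂ) := by
      have step : ∀ k ∈ Finset.Icc (-(G.n : ℤ)) (G.n : ℤ),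
          conj (c k) * fourierCoeff (lowProj L G.m (trigSum L G.n c)) k
            = if k ∈ Finset.Icc (-(G.m : ℤ)) (G.m : ℤ) then ((‖c k‖ ^ 2 : ℝ) : ℂ) else 0 := by
        intro k hk
        rw [lowProj, fourierCoeff_trigSum]
        by_cases hkm : k ∈ Finset.Icc (-(G.m : ℤ)) (G.m : ℤ)
        · rw [if_pos hkm, if_pos hkm, fourierCoeff_trigSum, if_pos hk, conj_mul_self]
        · rw [if_neg hkm, if_neg hkm, mul_zero]
      rw [Finset.sum_congr rfl step, Finset.sum_ite_mem,
        Finset.inter_eq_right.mpr hsub, Complex.ofReal_sum]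
    have e2 : ∑ k ∈ Finset.Icc (-(G.n : ℤ)) (G.n : ℤ),
          conj (c k) * fourierCoeff (trigSum L G.m fun k => G.vc k s) k
        = ∑ k ∈ Finset.Icc (-(G.m : ℤ)) (G.m : ℤ), conj (c k) * G.vc k s := by
      have step : ∀ k ∈ Finset.Icc (-(G.n : ℤ)) (G.n : ℤ),
          conj (c k) * fourierCoeff (trigSum L G.m fun k => G.vc k s) k
            = if k ∈ Finset.Icc (-(G.m : ℤ)) (G.m : ℤ) then conj (c k) * G.vc k s else 0 := by
        intro k hk
        rw [fourierCoeff_trigSum]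
        by_cases hkm : k ∈ Finset.Icc (-(G.m : ℤ)) (G.m : ℤ)
        · rw [if_pos hkm, if_pos hkm]
        · rw [if_neg hkm, if_neg hkm, mul_zero]
      rw [Finset.sum_congr rfl step, Finset.sum_ite_mem, Finset.inter_eq_right.mpr hsub]
    rw [e1, e2]
    ring
  rw [hΦ1, hΦ2, hΦ3, hΦ4, hΦ5, hΦ6] at key
  have him := congrArg Complex.im key
  simp only [Complex.add_im, Complex.sub_im, Complex.mul_im, Complex.mul_re,
    Complex.I_re, Complex.I_im, Complex.ofReal_re, Complex.ofReal_im, Complex.sub_re,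
    zero_mul, one_mul, mul_zero, zero_add, sub_zero, zero_sub, mul_one, add_zero] at him
  simp only [hc] at him
  linarith [him]

end Energy


section MainAux

lemma cs_sqrt (s : Finset ℤ) (f g : ℤ → ℝ) (hf : ∀ i, 0 ≤ f i) (hg : ∀ i, 0 ≤ g i) :
    ∑ i ∈ s, f i * g i ≤ Real.sqrt (∑ i ∈ s, f i ^ 2) * Real.sqrt (∑ i ∈ s, g i ^ 2) := by
  have h := Finset.sum_mul_sq_le_sq_mul_sq s f g
  have h1 : 0 ≤ ∑ i ∈ s, f i * g i := Finset.sum_nonneg fun i _ => mul_nonneg (hf i) (hg i)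
  have h2 := Real.sqrt_le_sqrt h
  rwa [Real.sqrt_sq h1, Real.sqrt_mul (Finset.sum_nonneg fun i _ => sq_nonneg (f i))] at h2

end MainAux

set_option maxHeartbeats 1000000

/-- the `L²` bound: every Galerkin solution satisfies
`sup_{s ≥ -k₀} ‖w(s)‖ ≤ ‖f‖/γ + (μ/γ)^{1/2} |v|_X`. -/
theorem galerkin_L2_bound (L : ℝ) [Fact (0 < L)] (G : GalerkinSolution L)
    (s : ℝ) (hs : -G.k₀ ≤ s) :
    l2norm L (G.w s) ≤ l2norm L G.f / G.γ + Real.sqrt (G.μ / G.γ) * G.normX := by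
  classical
  have hL0 : (0 : ℝ) < L := Fact.out
  have hsL : (0 : ℝ) < Real.sqrt L := Real.sqrt_pos.mpr hL0
  set Iccn := Finset.Icc (-(G.n : ℤ)) (G.n : ℤ) with hIccn
  set Iccm := Finset.Icc (-(G.m : ℤ)) (G.m : ℤ) with hIccm
  set y : ℝ → ℝ := fun t => ∑ k ∈ Iccn, ‖G.a k t‖ ^ 2 with hy
  set y' : ℝ → ℝ := fun t =>
    2 * (∑ k ∈ Iccn, (starRingEnd ℂ) (G.a k t) * G.a' k t).re with hy'
  have hynn : ∀ t, 0 ≤ y t := fun t => Finset.sum_nonneg fun k _ => sq_nonneg _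
  have hy0 : y (-G.k₀) = 0 := by
    simp only [hy]
    refine Finset.sum_eq_zero fun k _ => ?_
    rw [G.hinit k]
    simp
  -- derivative of the energy
  have hyd : ∀ t, -G.k₀ ≤ t → HasDerivWithinAt y (y' t) (Set.Ici (-G.k₀)) t := by
    intro t ht
    have hk : ∀ k ∈ Iccn, HasDerivWithinAt (fun u => ‖G.a k u‖ ^ 2)
        (2 * ((starRingEnd ℂ) (G.a k t) * G.a' k t).re) (Set.Ici (-G.k₀)) t := by
      intro k _
      have hak := G.ha k t ht
      have hre : HasDerivWithinAt (fun u => (G.a k u).re) ((G.a' k t).re)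
          (Set.Ici (-G.k₀)) t :=
        Complex.reCLM.hasFDerivAt.comp_hasDerivWithinAt t hak
      have him : HasDerivWithinAt (fun u => (G.a k u).im) ((G.a' k t).im)
          (Set.Ici (-G.k₀)) t :=
        Complex.imCLM.hasFDerivAt.comp_hasDerivWithinAt t hak
      have hfun : (fun u => ‖G.a k u‖ ^ 2)
          = fun u => (G.a k u).re * (G.a k u).re + (G.a k u).im * (G.a k u).im := by
        funext u
        rw [Complex.sq_norm, Complex.normSq_apply]
      rw [hfun]
      have hsum2 := (hre.fun_mul hre).fun_add (him.fun_mul him)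
      have hval : 2 * ((starRingEnd ℂ) (G.a k t) * G.a' k t).re
          = (G.a' k t).re * (G.a k t).re + (G.a k t).re * (G.a' k t).re
            + ((G.a' k t).im * (G.a k t).im + (G.a k t).im * (G.a' k t).im) := by
        simp only [Complex.mul_re, Complex.conj_re, Complex.conj_im]
        ring
      rw [hval]
      exact hsum2
    have hsum := HasDerivWithinAt.fun_sum hk
    have heq2 : y' t = ∑ k ∈ Iccn, 2 * ((starRingEnd ℂ) (G.a k t) * G.a' k t).re := by
      simp only [hy']
      rw [Complex.re_sum, Finset.mul_sum]
    rw [heq2]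
    exact hsum
  -- bounds on the data
  have hfint : (0:ℝ) ≤ ∫ x : AddCircle L, ‖G.f x‖ ^ 2 :=
    integral_nonneg fun x => sq_nonneg _
  set F : ℝ := Real.sqrt (∑ k ∈ Iccn, ‖fourierCoeff G.f k‖ ^ 2) with hFdef
  have hF0 : 0 ≤ F := Real.sqrt_nonneg _
  have hF : F ≤ l2norm L G.f / Real.sqrt L := by
    have hb := bessel G.f G.hf G.n
    have h2 := Real.sqrt_le_sqrt hb
    rw [Real.sqrt_div hfint] at h2
    exact h2.trans_eq (by rw [l2norm])
  set X : ℝ := G.normX with hXdef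
  obtain ⟨C, hC⟩ := G.hvX
  have hbdd1 : BddAbove (Set.range fun t => l2norm L (G.v t)) := by
    refine ⟨C, ?_⟩
    rintro _ ⟨t, rfl⟩
    have h1 := hC t
    have h2 : 0 ≤ l2norm L (trigSum L G.m fun k => deriv (G.vc k) t) := Real.sqrt_nonneg _
    calc l2norm L (G.v t) = l2norm L (trigSum L G.m fun k => G.vc k t) := rfl
      _ ≤ C := by linarith
  have hbdd2 : BddAbove (Set.range fun t => l2norm L (G.vs t)) := by
    refine ⟨C, ?_⟩
    rintro _ ⟨t, rfl⟩
    have h1 := hC t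
    have h2 : 0 ≤ l2norm L (trigSum L G.m fun k => G.vc k t) := Real.sqrt_nonneg _
    calc l2norm L (G.vs t) = l2norm L (trigSum L G.m fun k => deriv (G.vc k) t) := rfl
      _ ≤ C := by linarith
  have hsup2nn : 0 ≤ ⨆ t : ℝ, l2norm L (G.vs t) :=
    le_trans (Real.sqrt_nonneg _) (le_ciSup hbdd2 0)
  have hvle : ∀ t, l2norm L (G.v t) ≤ X := by
    intro t
    have h1 := le_ciSup hbdd1 t
    rw [hXdef, GalerkinSolution.normX]
    linarith
  have hX0 : 0 ≤ X := le_trans (Real.sqrt_nonneg _) (hvle 0)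
  set Vb : ℝ := X / Real.sqrt L with hVbdef
  have hVb0 : 0 ≤ Vb := div_nonneg hX0 hsL.le
  have hV : ∀ t, Real.sqrt (∑ k ∈ Iccm, ‖G.vc k t‖ ^ 2) ≤ Vb := by
    intro t
    have h1 : l2norm L (G.v t)
        = Real.sqrt L * Real.sqrt (∑ k ∈ Iccm, ‖G.vc k t‖ ^ 2) := l2norm_trigSum _ _
    have h2 := hvle t
    rw [h1] at h2
    rw [hVbdef, le_div_iff₀ hsL]
    linarith
  have hγ := G.hγ
  have hμ := G.hμ
  set c : ℝ := Real.sqrt (G.μ / G.γ) with hcdef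
  have hc0 : 0 ≤ c := Real.sqrt_nonneg _
  have hc2 : c ^ 2 = G.μ / G.γ := Real.sq_sqrt (div_nonneg hμ.le hγ.le)
  have hμeq : G.γ * c ^ 2 = G.μ := by
    rw [hc2]
    field_simp
  set R : ℝ := (l2norm L G.f / G.γ + c * X) / Real.sqrt L with hRdef
  have hR0' : F / G.γ + c * Vb ≤ R := by
    have h1 : F / G.γ + c * Vb
        ≤ (l2norm L G.f / Real.sqrt L) / G.γ + c * (X / Real.sqrt L) := by
      gcongr
    have h2 : (l2norm L G.f / Real.sqrt L) / G.γ + c * (X / Real.sqrt L)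
        = (l2norm L G.f / G.γ + c * X) / Real.sqrt L := by
      ring
    rw [hRdef]
    linarith
  have hRnn : 0 ≤ R :=
    le_trans (add_nonneg (div_nonneg hF0 hγ.le) (mul_nonneg hc0 hVb0)) hR0'
  -- the fencing argument
  have hfence : ∀ ε : ℝ, 0 < ε → y s ≤ (R + ε) ^ 2 := by
    intro ε hε
    have hRε : 0 < R + ε := by linarith
    have hbound : ∀ t ∈ Set.Ico (-G.k₀) s, y t = (R + ε) ^ 2 → y' t < 0 := by
      intro t ht hyt
      have hts : -G.k₀ ≤ t := ht.1
      have hei := energy_identity G t hts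
      rw [← hIccn, ← hIccm] at hei
      have hyy : ∑ k ∈ Iccn, ‖G.a k t‖ ^ 2 = y t := rfl
      rw [hyy, hyt] at hei
      have hFim : (∑ k ∈ Iccn, (starRingEnd ℂ) (G.a k t) * fourierCoeff G.f k).im
          ≤ (R + ε) * F := by
        have h1 : (∑ k ∈ Iccn, (starRingEnd ℂ) (G.a k t) * fourierCoeff G.f k).im
            ≤ ‖∑ k ∈ Iccn, (starRingEnd ℂ) (G.a k t) * fourierCoeff G.f k‖ :=
          Complex.im_le_norm _
        have h2 : ‖∑ k ∈ Iccn, (starRingEnd ℂ) (G.a k t) * fourierCoeff G.f k‖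
            ≤ ∑ k ∈ Iccn, ‖G.a k t‖ * ‖fourierCoeff G.f k‖ := by
          refine (norm_sum_le _ _).trans (le_of_eq (Finset.sum_congr rfl fun k _ => ?_))
          rw [norm_mul, RCLike.norm_conj]
        have h3 := cs_sqrt Iccn (fun k => ‖G.a k t‖) (fun k => ‖fourierCoeff G.f k‖)
          (fun k => norm_nonneg _) (fun k => norm_nonneg _)
        have h4 : Real.sqrt (∑ k ∈ Iccn, ‖G.a k t‖ ^ 2) = R + ε := by
          rw [hyy, hyt, Real.sqrt_sq hRε.le]
        calc (∑ k ∈ Iccn, (starRingEnd ℂ) (G.a k t) * fourierCoeff G.f k).im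
            ≤ ∑ k ∈ Iccn, ‖G.a k t‖ * ‖fourierCoeff G.f k‖ := h1.trans h2
          _ ≤ Real.sqrt (∑ k ∈ Iccn, ‖G.a k t‖ ^ 2)
              * Real.sqrt (∑ k ∈ Iccn, ‖fourierCoeff G.f k‖ ^ 2) := h3
          _ = (R + ε) * F := by rw [h4, hFdef]
      set Pm : ℝ := ∑ k ∈ Iccm, ‖G.a k t‖ ^ 2 with hPm
      have hPmnn : 0 ≤ Pm := Finset.sum_nonneg fun k _ => sq_nonneg _
      have hRm : (∑ k ∈ Iccm, (starRingEnd ℂ) (G.a k t) * G.vc k t).re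
          ≤ Real.sqrt Pm * Vb := by
        have h1 : (∑ k ∈ Iccm, (starRingEnd ℂ) (G.a k t) * G.vc k t).re
            ≤ ‖∑ k ∈ Iccm, (starRingEnd ℂ) (G.a k t) * G.vc k t‖ := Complex.re_le_norm _
        have h2 : ‖∑ k ∈ Iccm, (starRingEnd ℂ) (G.a k t) * G.vc k t‖
            ≤ ∑ k ∈ Iccm, ‖G.a k t‖ * ‖G.vc k t‖ := by
          refine (norm_sum_le _ _).trans (le_of_eq (Finset.sum_congr rfl fun k _ => ?_))
          rw [norm_mul, RCLike.norm_conj]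
        have h3 := cs_sqrt Iccm (fun k => ‖G.a k t‖) (fun k => ‖G.vc k t‖)
          (fun k => norm_nonneg _) (fun k => norm_nonneg _)
        have h4 : Real.sqrt (∑ k ∈ Iccm, ‖G.a k t‖ ^ 2)
            * Real.sqrt (∑ k ∈ Iccm, ‖G.vc k t‖ ^ 2) ≤ Real.sqrt Pm * Vb :=
          mul_le_mul_of_nonneg_left (hV t) (Real.sqrt_nonneg _)
        calc (∑ k ∈ Iccm, (starRingEnd ℂ) (G.a k t) * G.vc k t).re
            ≤ ∑ k ∈ Iccm, ‖G.a k t‖ * ‖G.vc k t‖ := h1.trans h2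
          _ ≤ Real.sqrt Pm * Vb := h3.trans h4
      have hAM : -Pm + Real.sqrt Pm * Vb ≤ Vb ^ 2 / 4 := by
        nlinarith [sq_nonneg (Real.sqrt Pm - Vb / 2), Real.sq_sqrt hPmnn]
      have hμRm : G.μ * (∑ k ∈ Iccm, (starRingEnd ℂ) (G.a k t) * G.vc k t).re
          ≤ G.μ * (Real.sqrt Pm * Vb) := mul_le_mul_of_nonneg_left hRm hμ.le
      have hμAM : G.μ * (-Pm + Real.sqrt Pm * Vb) ≤ G.μ * (Vb ^ 2 / 4) :=
        mul_le_mul_of_nonneg_left hAM hμ.le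
      have hyle : y' t ≤ 2 * (-G.γ * (R + ε) ^ 2 + F * (R + ε)) + G.μ * Vb ^ 2 / 2 := by
        simp only [hy']
        linarith [hei, hFim, hμRm, hμAM]
      have hq1 : G.γ * c * Vb + G.γ * ε ≤ G.γ * (R + ε) - F := by
        have h1 : G.γ * (F / G.γ + c * Vb) = F + G.γ * (c * Vb) := by
          field_simp
        have h2 := mul_le_mul_of_nonneg_left hR0' hγ.le
        rw [h1] at h2
        linarith
      have hq2 : c * Vb ≤ R + ε := by
        have h0 : 0 ≤ F / G.γ := div_nonneg hF0 hγ.le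
        linarith
      have hq3 : 0 ≤ G.γ * c * Vb := mul_nonneg (mul_nonneg hγ.le hc0) hVb0
      have hp1 : (R + ε) * (G.γ * c * Vb + G.γ * ε) ≤ (R + ε) * (G.γ * (R + ε) - F) :=
        mul_le_mul_of_nonneg_left hq1 hRε.le
      have hp2 : (G.γ * c * Vb) * (c * Vb) ≤ (G.γ * c * Vb) * (R + ε) :=
        mul_le_mul_of_nonneg_left hq2 hq3
      have hμVb : G.γ * c * Vb * (c * Vb) = G.μ * Vb ^ 2 := by
        rw [← hμeq]
        ring
      have hnum : 2 * (-G.γ * (R + ε) ^ 2 + F * (R + ε)) + G.μ * Vb ^ 2 / 2 < 0 := by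
        linarith [hp1, hp2, hμVb.le, hμVb.ge, mul_pos (mul_pos hγ hε) hRε,
          mul_nonneg hμ.le (sq_nonneg Vb)]
      linarith
    have key := image_le_of_deriv_right_lt_deriv_boundary'
      (f := y) (f' := y') (a := -G.k₀) (b := s)
      (B := fun _ => (R + ε) ^ 2) (B' := fun _ => 0)
      (fun t ht => ((hyd t ht.1).continuousWithinAt).mono Set.Icc_subset_Ici_self)
      (fun t ht => (hyd t ht.1).mono (Set.Ici_subset_Ici.mpr ht.1))
      (by rw [hy0]; exact sq_nonneg _)
      continuousOn_const
      (fun t _ => hasDerivWithinAt_const _ _ _)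
      hbound
    exact key ⟨hs, le_rfl⟩
  -- conclusion
  have hw : l2norm L (G.w s) = Real.sqrt L * Real.sqrt (y s) := by
    calc l2norm L (G.w s)
        = Real.sqrt L * Real.sqrt (∑ k ∈ Iccn, ‖G.a k s‖ ^ 2) := l2norm_trigSum _ _
      _ = Real.sqrt L * Real.sqrt (y s) := rfl
  have hRT : Real.sqrt L * R = l2norm L G.f / G.γ + c * X := by
    rw [hRdef, mul_div_assoc']
    field_simp
  rw [hw, ← hRT]
  refine le_of_forall_pos_le_add fun ε hε => ?_
  have hε' : 0 < ε / Real.sqrt L := div_pos hε hsL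
  have hfe := hfence (ε / Real.sqrt L) hε'
  have hsqle : Real.sqrt (y s) ≤ R + ε / Real.sqrt L := by
    have h1 := Real.sqrt_le_sqrt hfe
    rwa [Real.sqrt_sq (by linarith : (0:ℝ) ≤ R + ε / Real.sqrt L)] at h1
  have h2 : Real.sqrt L * Real.sqrt (y s) ≤ Real.sqrt L * (R + ε / Real.sqrt L) :=
    mul_le_mul_of_nonneg_left hsqle hsL.le
  have h3 : Real.sqrt L * (R + ε / Real.sqrt L) = Real.sqrt L * R + ε := by
    field_simp
  linarith
end

section
/- Let u be a bounded classical solution of the damped driven NLS (the feedback equation with μ = 0), and let w be a bounded classical solution of the feedback equation with the same γ and f, with μ > 0 and datum v(s) = P_m u(s,·). Set δ = w − u. Then for every s ∈ ℝ, (1/2)(d/ds)‖δ(s,·)‖² + γ‖δ(s,·)‖² + μ‖P_m δ(s,·)‖² = −Im ∫₀^L w(s,x)·u(s,x)·(conj δ(s,x))² dx. -/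
open MeasureTheory Finset

/-- A bounded classical solution of the feedback equation
`i ∂ₛ w + ∂ₓ² w + |w|² w + iγ w = f - iμ (P_m w - v(s))` on `ℝ × AddCircle L`,
where the datum is `v(s) = ∑_{|k| ≤ m} (vc k s) e^{2πikx/L}`: `w` is C¹ in `s` and C² in `x`
with these derivatives jointly continuous, and
`sup_s (‖w(s)‖_∞ + ‖∂ₓ w(s)‖ + ‖∂ₛ w(s)‖) < ∞`.  Taking `μ = 0` gives a bounded classical
solution of the damped driven NLS `i ∂ₛ w + ∂ₓ² w + |w|² w + iγ w = f`. -/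
structure FeedbackSol (L : ℝ) [Fact (0 < L)] (γ μ : ℝ) (m : ℕ)
    (f : AddCircle L → ℂ) (vc : ℤ → ℝ → ℂ) where
  /-- the solution -/
  w : ℝ → AddCircle L → ℂ
  /-- the time derivative `∂ₛ w` -/
  ws : ℝ → AddCircle L → ℂ
  /-- the spatial derivative `∂ₓ w` -/
  wx : ℝ → AddCircle L → ℂ
  /-- the second spatial derivative `∂ₓ² w` -/
  wxx : ℝ → AddCircle L → ℂ
  hws : ∀ (x : AddCircle L) (s : ℝ), HasDerivAt (fun σ : ℝ => w σ x) (ws s x) s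
  hwx : ∀ (s t : ℝ), HasDerivAt (fun τ : ℝ => w s (τ : AddCircle L)) (wx s (t : AddCircle L)) t
  hwxx : ∀ (s t : ℝ),
    HasDerivAt (fun τ : ℝ => wx s (τ : AddCircle L)) (wxx s (t : AddCircle L)) t
  hw_cont : Continuous fun p : ℝ × AddCircle L => w p.1 p.2
  hws_cont : Continuous fun p : ℝ × AddCircle L => ws p.1 p.2
  hwx_cont : Continuous fun p : ℝ × AddCircle L => wx p.1 p.2
  hwxx_cont : Continuous fun p : ℝ × AddCircle L => wxx p.1 p.2
  heq : ∀ (s : ℝ) (x : AddCircle L),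
    Complex.I * ws s x + wxx s x + Complex.ofReal (‖w s x‖ ^ 2) * w s x
      + Complex.I * (γ : ℂ) * w s x
      = f x - Complex.I * (μ : ℂ) * (lowProj L m (w s) x - trigSum L m (fun k => vc k s) x)
  hbdd : ∃ C : ℝ, ∀ s : ℝ,
    (⨆ x : AddCircle L, ‖w s x‖) + l2norm L (wx s) + l2norm L (ws s) ≤ C

/-- The `X`-norm `|v|_X = sup_s ‖v(s)‖ + sup_s ‖∂ₛ v(s)‖` of a datum with coefficients `vc`. -/
noncomputable def vnormX (L : ℝ) [Fact (0 < L)] (m : ℕ) (vc : ℤ → ℝ → ℂ) : ℝ :=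
  (⨆ s : ℝ, l2norm L (trigSum L m (fun k => vc k s)))
    + ⨆ s : ℝ, l2norm L (trigSum L m (fun k => deriv (vc k) s))

/-- `vc` are the coefficients of an admissible datum: a continuously differentiable map
from `ℝ` into trigonometric polynomials of degree ≤ m, with `|v|_X < ∞`. -/
def IsDatum (L : ℝ) [Fact (0 < L)] (m : ℕ) (vc : ℤ → ℝ → ℂ) : Prop :=
  (∀ k : ℤ, ContDiff ℝ 1 (vc k)) ∧
    ∃ C : ℝ, ∀ s : ℝ,
      l2norm L (trigSum L m (fun k => vc k s))
        + l2norm L (trigSum L m (fun k => deriv (vc k) s)) ≤ C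


section AuxLemmas
open AddCircle ComplexConjugate
variable {L : ℝ} [hL : Fact (0 < L)]


lemma myIntegrable {E : Type*} [NormedAddCommGroup E] {f : AddCircle L → E} (hf : Continuous f) (μ : Measure (AddCircle L)) [IsFiniteMeasure μ] :
    Integrable f μ := by
  have : HasCompactSupport f := by
    rw [HasCompactSupport]
    exact IsCompact.of_isClosed_subset isCompact_univ (isClosed_tsupport f) (Set.subset_univ _)
  exact hf.integrable_of_hasCompactSupport this

lemma integral_vol_eq (f : AddCircle L → ℂ) :
    ∫ x : AddCircle L, f x = (L : ℂ) * ∫ x : AddCircle L, f x ∂haarAddCircle := by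
  rw [volume_eq_smul_haarAddCircle, integral_smul_measure, ENNReal.toReal_ofReal hL.out.le,
    Complex.real_smul]

lemma integral_fourier_haar {n : ℤ} (hn : n ≠ 0) :
    ∫ x : AddCircle L, (fourier n x : ℂ) ∂haarAddCircle = 0 :=
  integral_eq_zero_of_add_right_eq_neg (fourier_add_half_inv_index hn hL.out)

lemma integral_fourier (n : ℤ) :
    ∫ x : AddCircle L, (fourier n x : ℂ) = if n = 0 then (L : ℂ) else 0 := by
  rw [integral_vol_eq]
  split_ifs with h
  · subst h
    simp only [fourier_zero]
    simp
  · rw [integral_fourier_haar h, mul_zero]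


lemma fourierCoeff_vol (g : AddCircle L → ℂ) :
    (L : ℂ) * fourierCoeff g k = ∫ x : AddCircle L, fourier (-k) x * g x := by
  rw [integral_vol_eq]
  congr 1

lemma integral_fourier_mul_conj (g : AddCircle L → ℂ) (k : ℤ) :
    ∫ x : AddCircle L, fourier k x * conj (g x)
      = (L : ℂ) * conj (fourierCoeff g k) := by
  have h1 : ∀ x : AddCircle L, fourier k x * conj (g x) = conj (fourier (-k) x * g x) := by
    intro x
    rw [map_mul, fourier_neg, Complex.conj_conj]
  simp_rw [h1]
  rw [integral_conj, ← fourierCoeff_vol, map_mul, Complex.conj_ofReal]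

lemma integral_trig_mul_conj {m : ℕ} (c : ℤ → ℂ) (g : AddCircle L → ℂ) (hg : Continuous g) :
    ∫ x : AddCircle L, trigSum L m c x * conj (g x)
      = (L : ℂ) * ∑ k ∈ Finset.Icc (-(m : ℤ)) (m : ℤ), c k * conj (fourierCoeff g k) := by
  have h1 : ∀ x : AddCircle L, trigSum L m c x * conj (g x)
      = ∑ k ∈ Finset.Icc (-(m : ℤ)) (m : ℤ), c k * (fourier k x * conj (g x)) := by
    intro x
    simp only [trigSum, Finset.sum_mul]
    exact Finset.sum_congr rfl fun k _ => by ring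
  simp_rw [h1]
  rw [integral_finset_sum]
  · rw [Finset.mul_sum]
    refine Finset.sum_congr rfl fun k _ => ?_
    rw [integral_const_mul _ _, integral_fourier_mul_conj g k]
    ring
  · intro k _
    refine myIntegrable ?_ _
    exact continuous_const.mul ((fourier k).continuous.mul (Complex.continuous_conj.comp hg))

lemma integral_trig_mul_conj_trig {m : ℕ} (c d : ℤ → ℂ) :
    ∫ x : AddCircle L, trigSum L m c x * conj (trigSum L m d x)
      = (L : ℂ) * ∑ k ∈ Finset.Icc (-(m : ℤ)) (m : ℤ), c k * conj (d k) := by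
  have h1 : ∀ x : AddCircle L, trigSum L m c x * conj (trigSum L m d x)
      = ∑ k ∈ Finset.Icc (-(m : ℤ)) (m : ℤ), ∑ j ∈ Finset.Icc (-(m : ℤ)) (m : ℤ),
          (c k * conj (d j)) * fourier (k + -j) x := by
    intro x
    simp only [trigSum]
    rw [map_sum, Finset.sum_mul_sum]
    refine Finset.sum_congr rfl fun k _ => Finset.sum_congr rfl fun j _ => ?_
    rw [map_mul, ← fourier_neg, fourier_add]
    ring
  simp_rw [h1]
  rw [integral_finset_sum]
  · rw [Finset.mul_sum]
    refine Finset.sum_congr rfl fun k hk => ?_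
    rw [integral_finset_sum]
    · have h2 : ∀ j ∈ Finset.Icc (-(m : ℤ)) (m : ℤ),
          ∫ x : AddCircle L, (c k * conj (d j)) * fourier (k + -j) x
            = if j = k then (L : ℂ) * (c k * conj (d k)) else 0 := by
        intro j _
        rw [integral_const_mul _ _, integral_fourier]
        by_cases h : j = k
        · subst h; simp [mul_comm]
        · rw [if_neg (by omega), if_neg h, mul_zero]
      rw [Finset.sum_congr rfl h2, Finset.sum_ite_eq' _ k _, if_pos hk]
    · intro j _
      exact myIntegrable (continuous_const.mul (fourier _).continuous) _
  · intro k _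
    exact integrable_finset_sum _ fun j _ =>
      myIntegrable (continuous_const.mul (fourier _).continuous) _

lemma nonlin_identity (a b : ℂ) :
    (((‖a‖ ^ 2 : ℝ) : ℂ) * a - ((‖b‖ ^ 2 : ℝ) : ℂ) * b) * conj (a - b)
      - a * b * (conj (a - b)) ^ 2
      = conj ((((‖a‖ ^ 2 : ℝ) : ℂ) * a - ((‖b‖ ^ 2 : ℝ) : ℂ) * b) * conj (a - b)
        - a * b * (conj (a - b)) ^ 2) := by
  have ha : ((‖a‖ ^ 2 : ℝ) : ℂ) = a * conj a := by
    rw [← Complex.normSq_eq_norm_sq]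
    exact (Complex.mul_conj a).symm
  have hb : ((‖b‖ ^ 2 : ℝ) : ℂ) = b * conj b := by
    rw [← Complex.normSq_eq_norm_sq]
    exact (Complex.mul_conj b).symm
  rw [ha, hb]
  simp only [map_sub, map_mul, map_pow, Complex.conj_conj]
  ring

lemma nonlin_im (a b : ℂ) :
    ((((‖a‖ ^ 2 : ℝ) : ℂ) * a - ((‖b‖ ^ 2 : ℝ) : ℂ) * b) * conj (a - b)).im
      = (a * b * (conj (a - b)) ^ 2).im := by
  have h := nonlin_identity a b
  have h0 := Complex.conj_eq_iff_im.mp h.symm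
  rw [Complex.sub_im] at h0
  linarith

lemma normsq_hasDeriv {f : ℝ → ℂ} {f' : ℂ} {t : ℝ} (hf : HasDerivAt f f' t) :
    HasDerivAt (fun τ => ‖f τ‖ ^ 2) (2 * (f' * conj (f t)).re) t := by
  have hre : HasDerivAt (fun τ => (f τ).re) f'.re t :=
    Complex.reCLM.hasFDerivAt.comp_hasDerivAt t hf
  have him : HasDerivAt (fun τ => (f τ).im) f'.im t :=
    Complex.imCLM.hasFDerivAt.comp_hasDerivAt t hf
  have h := (hre.mul hre).add (him.mul him)
  have heq : ∀ τ, ‖f τ‖ ^ 2 = (f τ).re * (f τ).re + (f τ).im * (f τ).im := by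
    intro τ
    rw [← Complex.normSq_apply, Complex.normSq_eq_norm_sq]
  rw [show (2 * (f' * conj (f t)).re) = (f'.re * (f t).re + (f t).re * f'.re)
      + (f'.im * (f t).im + (f t).im * f'.im) by
    simp [Complex.mul_re, Complex.conj_re, Complex.conj_im]; ring]
  have h2 : (fun τ => ‖f τ‖ ^ 2) = fun τ => (f τ).re * (f τ).re + (f τ).im * (f τ).im :=
    funext heq
  rw [h2]
  exact h

lemma mul_conj_self_eq (z : ℂ) : z * conj z = ((‖z‖ ^ 2 : ℝ) : ℂ) := by
  rw [← Complex.normSq_eq_norm_sq, Complex.mul_conj]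

lemma ibp_im {D Dx Dxx : AddCircle L → ℂ}
    (hD : ∀ t : ℝ, HasDerivAt (fun τ : ℝ => D (τ : AddCircle L)) (Dx (t : AddCircle L)) t)
    (hDx : ∀ t : ℝ, HasDerivAt (fun τ : ℝ => Dx (τ : AddCircle L)) (Dxx (t : AddCircle L)) t)
    (hDc : Continuous D) (hDxc : Continuous Dx) (hDxxc : Continuous Dxx) :
    (∫ x : AddCircle L, Dxx x * conj (D x)).im = 0 := by
  have hcoe : Continuous ((↑) : ℝ → AddCircle L) := AddCircle.continuous_mk' L
  have hG : ∀ t : ℝ, HasDerivAt (fun τ : ℝ => Dx (τ : AddCircle L) * conj (D (τ : AddCircle L)))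
      (Dxx (t : AddCircle L) * conj (D (t : AddCircle L))
        + Dx (t : AddCircle L) * conj (Dx (t : AddCircle L))) t := by
    intro t
    have hstar : HasDerivAt (fun τ : ℝ => conj (D (τ : AddCircle L)))
        (conj (Dx (t : AddCircle L))) t := by
      simpa only [starRingEnd_apply] using (hD t).star
    exact (hDx t).mul hstar
  have hii : IntervalIntegrable
      (fun t : ℝ => Dxx (t : AddCircle L) * conj (D (t : AddCircle L))
        + Dx (t : AddCircle L) * conj (Dx (t : AddCircle L))) volume 0 (0 + L) := by
    apply Continuous.intervalIntegrable
    exact ((hDxxc.comp hcoe).mul (Complex.continuous_conj.comp (hDc.comp hcoe))).add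
      ((hDxc.comp hcoe).mul (Complex.continuous_conj.comp (hDxc.comp hcoe)))
  have hint := intervalIntegral.integral_eq_sub_of_hasDerivAt (f := fun t : ℝ =>
      Dx (t : AddCircle L) * conj (D (t : AddCircle L))) (fun t _ => hG t) hii
  have hper : ((0 + L : ℝ) : AddCircle L) = ((0 : ℝ) : AddCircle L) := by
    rw [zero_add]
    simp [AddCircle.coe_period]
  rw [hper, sub_self] at hint
  rw [AddCircle.intervalIntegral_preimage L 0
    (fun x => Dxx x * conj (D x) + Dx x * conj (Dx x))] at hint
  rw [integral_add (f := fun x => Dxx x * conj (D x)) (g := fun x => Dx x * conj (Dx x))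
    (myIntegrable (by continuity) _) (myIntegrable (by continuity) _)] at hint
  have h2 : ∫ x : AddCircle L, Dxx x * conj (D x)
      = - ∫ x : AddCircle L, Dx x * conj (Dx x) := by linear_combination hint
  rw [h2]
  simp_rw [mul_conj_self_eq]
  have h3 : ∫ x : AddCircle L, ((‖Dx x‖ ^ 2 : ℝ) : ℂ) = ((∫ x : AddCircle L, ‖Dx x‖ ^ 2 : ℝ) : ℂ) :=
    integral_ofReal
  rw [Complex.neg_im, h3, Complex.ofReal_im, neg_zero]

lemma integral_re' {f : AddCircle L → ℂ} (hf : Integrable f volume) :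
    (∫ x : AddCircle L, f x).re = ∫ x : AddCircle L, (f x).re := (integral_re hf).symm

lemma integral_im' {f : AddCircle L → ℂ} (hf : Integrable f volume) :
    (∫ x : AddCircle L, f x).im = ∫ x : AddCircle L, (f x).im := (integral_im hf).symm

end AuxLemmas

open ComplexConjugate in
/-- energy identity for the difference `δ = w - u`: if `u` is a bounded
classical solution of the damped driven NLS and `w` is a bounded classical solution of the
feedback equation with datum `v(s) = P_m u(s,·)`, then for every `s ∈ ℝ`,
`(1/2)(d/ds)‖δ(s)‖² + γ‖δ(s)‖² + μ‖P_m δ(s)‖² = -Im ∫ w·u·(conj δ)²`. -/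
theorem difference_energy_identity (L : ℝ) [Fact (0 < L)] (γ μ : ℝ) (hγ : 0 < γ)
    (hμ : 0 < μ) (m : ℕ) (f : AddCircle L → ℂ) (hf : Continuous f)
    (U : FeedbackSol L γ 0 0 f (fun _ _ => 0))
    (W : FeedbackSol L γ μ m f (fun k s => fourierCoeff (U.w s) k)) (s : ℝ) :
    HasDerivAt (fun σ : ℝ => (l2norm L (fun x => W.w σ x - U.w σ x)) ^ 2)
      (2 * (-(∫ x : AddCircle L,
          W.w s x * U.w s x * ((starRingEnd ℂ) (W.w s x - U.w s x)) ^ 2).im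
        - γ * (l2norm L (fun x => W.w s x - U.w s x)) ^ 2
        - μ * (l2norm L (lowProj L m (fun x => W.w s x - U.w s x))) ^ 2)) s := by
  classical
  have hcW : ∀ σ, Continuous (W.w σ) := fun σ => W.hw_cont.comp (Continuous.prodMk_right σ)
  have hcU : ∀ σ, Continuous (U.w σ) := fun σ => U.hw_cont.comp (Continuous.prodMk_right σ)
  have hcWs : ∀ σ, Continuous (W.ws σ) := fun σ => W.hws_cont.comp (Continuous.prodMk_right σ)
  have hcUs : ∀ σ, Continuous (U.ws σ) := fun σ => U.hws_cont.comp (Continuous.prodMk_right σ)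
  have hcWx : ∀ σ, Continuous (W.wx σ) := fun σ => W.hwx_cont.comp (Continuous.prodMk_right σ)
  have hcUx : ∀ σ, Continuous (U.wx σ) := fun σ => U.hwx_cont.comp (Continuous.prodMk_right σ)
  have hcWxx : ∀ σ, Continuous (W.wxx σ) := fun σ => W.hwxx_cont.comp (Continuous.prodMk_right σ)
  have hcUxx : ∀ σ, Continuous (U.wxx σ) := fun σ => U.hwxx_cont.comp (Continuous.prodMk_right σ)
  have hDc : Continuous fun x : AddCircle L => W.w s x - U.w s x := (hcW s).sub (hcU s)
  have hDsc : Continuous fun x : AddCircle L => W.ws s x - U.ws s x := (hcWs s).sub (hcUs s)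
  have hDxc : Continuous fun x : AddCircle L => W.wx s x - U.wx s x := (hcWx s).sub (hcUx s)
  have hDxxc : Continuous fun x : AddCircle L => W.wxx s x - U.wxx s x :=
    (hcWxx s).sub (hcUxx s)
  have hPc : Continuous (lowProj L m fun x => W.w s x - U.w s x) := by
    unfold lowProj trigSum
    exact continuous_finset_sum _ fun k _ => continuous_const.mul (fourier k).continuous
  have hcoeff : ∀ k : ℤ, fourierCoeff (fun y => W.w s y - U.w s y) k
      = fourierCoeff (W.w s) k - fourierCoeff (U.w s) k := by
    intro k
    simp only [fourierCoeff, smul_eq_mul, mul_sub]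
    exact integral_sub (myIntegrable ((fourier (-k)).continuous.mul (hcW s)) _)
      (myIntegrable ((fourier (-k)).continuous.mul (hcU s)) _)
  have hPsub : ∀ x : AddCircle L, lowProj L m (W.w s) x - lowProj L m (U.w s) x
      = lowProj L m (fun y => W.w s y - U.w s y) x := by
    intro x
    simp only [lowProj, trigSum, hcoeff, sub_mul]
    rw [Finset.sum_sub_distrib]
  have hDs : ∀ x : AddCircle L, W.ws s x - U.ws s x
      = Complex.I * (W.wxx s x - U.wxx s x)
        + Complex.I * (((‖W.w s x‖ ^ 2 : ℝ) : ℂ) * W.w s x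
          - ((‖U.w s x‖ ^ 2 : ℝ) : ℂ) * U.w s x)
        - (γ : ℂ) * (W.w s x - U.w s x)
        - (μ : ℂ) * lowProj L m (fun y => W.w s y - U.w s y) x := by
    intro x
    have h1 := W.heq s x
    have h2 := U.heq s x
    rw [show trigSum L m (fun k => fourierCoeff (U.w s) k) x = lowProj L m (U.w s) x from rfl,
      hPsub x] at h1
    simp only [Complex.ofReal_zero, zero_mul, mul_zero, sub_zero] at h2
    linear_combination (-Complex.I) * h1 + Complex.I * h2
      + (W.ws s x - U.ws s x + (γ : ℂ) * (W.w s x - U.w s x)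
        + (μ : ℂ) * lowProj L m (fun y => W.w s y - U.w s y) x) * Complex.I_mul_I
  have hGc : Continuous fun p : ℝ × AddCircle L =>
      2 * ((W.ws p.1 p.2 - U.ws p.1 p.2) * conj (W.w p.1 p.2 - U.w p.1 p.2)).re :=
    continuous_const.mul (Complex.continuous_re.comp
      ((W.hws_cont.sub U.hws_cont).mul (Complex.continuous_conj.comp
        (W.hw_cont.sub U.hw_cont))))
  obtain ⟨C, hC⟩ := ((isCompact_Icc (a := s - 1) (b := s + 1)).prod
    (isCompact_univ (X := AddCircle L))).exists_bound_of_continuousOn hGc.continuousOn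
  have hbound : ∀ x : AddCircle L, ∀ σ ∈ Metric.ball s 1,
      ‖2 * ((W.ws σ x - U.ws σ x) * conj (W.w σ x - U.w σ x)).re‖ ≤ C := by
    intro x σ hσ
    rw [Metric.mem_ball, Real.dist_eq] at hσ
    have h1 := (abs_lt.mp hσ).1
    have h2 := (abs_lt.mp hσ).2
    exact hC (σ, x) ⟨⟨by linarith, by linarith⟩, Set.mem_univ x⟩
  have hmain := (hasDerivAt_integral_of_dominated_loc_of_deriv_le (μ := volume)
      (F := fun σ (x : AddCircle L) => ‖W.w σ x - U.w σ x‖ ^ 2)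
      (F' := fun σ (x : AddCircle L) =>
        2 * ((W.ws σ x - U.ws σ x) * conj (W.w σ x - U.w σ x)).re)
      (x₀ := s) (bound := fun _ => C) (s := Metric.ball s 1) (Metric.ball_mem_nhds s one_pos)
      (Filter.Eventually.of_forall fun σ =>
        (((hcW σ).sub (hcU σ)).norm.pow 2).aestronglyMeasurable)
      (myIntegrable (((hcW s).sub (hcU s)).norm.pow 2) _)
      (continuous_const.mul (Complex.continuous_re.comp (hDsc.mul
        (Complex.continuous_conj.comp hDc)))).aestronglyMeasurable
      (Filter.Eventually.of_forall hbound)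
      (integrable_const C)
      (Filter.Eventually.of_forall fun x σ _ =>
        normsq_hasDeriv ((W.hws x σ).sub (U.hws x σ)))).2
  have hfun : (fun σ => l2norm L (fun x => W.w σ x - U.w σ x) ^ 2)
      = fun σ => ∫ x : AddCircle L, ‖W.w σ x - U.w σ x‖ ^ 2 := by
    funext σ
    rw [l2norm, Real.sq_sqrt (integral_nonneg fun x => sq_nonneg _)]
  rw [hfun]
  convert hmain using 1
  case e'_4 => rfl
  case e'_5 => rfl
  have hconjD : Continuous fun x : AddCircle L => conj (W.w s x - U.w s x) :=
    Complex.continuous_conj.comp hDc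
  have hNc : Continuous fun x : AddCircle L =>
      ((‖W.w s x‖ ^ 2 : ℝ) : ℂ) * W.w s x - ((‖U.w s x‖ ^ 2 : ℝ) : ℂ) * U.w s x :=
    ((Complex.continuous_ofReal.comp ((hcW s).norm.pow 2)).mul (hcW s)).sub
      ((Complex.continuous_ofReal.comp ((hcU s).norm.pow 2)).mul (hcU s))
  have iA : Integrable (fun x : AddCircle L =>
      Complex.I * ((W.wxx s x - U.wxx s x) * conj (W.w s x - U.w s x))) volume :=
    myIntegrable (continuous_const.mul (hDxxc.mul hconjD)) _
  have iB : Integrable (fun x : AddCircle L =>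
      Complex.I * ((((‖W.w s x‖ ^ 2 : ℝ) : ℂ) * W.w s x
        - ((‖U.w s x‖ ^ 2 : ℝ) : ℂ) * U.w s x) * conj (W.w s x - U.w s x))) volume :=
    myIntegrable (continuous_const.mul (hNc.mul hconjD)) _
  have iC : Integrable (fun x : AddCircle L =>
      (γ : ℂ) * ((W.w s x - U.w s x) * conj (W.w s x - U.w s x))) volume :=
    myIntegrable (continuous_const.mul (hDc.mul hconjD)) _
  have iD : Integrable (fun x : AddCircle L =>
      (μ : ℂ) * (lowProj L m (fun y => W.w s y - U.w s y) x
        * conj (W.w s x - U.w s x))) volume :=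
    myIntegrable (continuous_const.mul (hPc.mul hconjD)) _
  have hZ : (∫ x : AddCircle L, (W.ws s x - U.ws s x) * conj (W.w s x - U.w s x))
      = Complex.I * (∫ x : AddCircle L,
          (W.wxx s x - U.wxx s x) * conj (W.w s x - U.w s x))
        + Complex.I * (∫ x : AddCircle L,
          (((‖W.w s x‖ ^ 2 : ℝ) : ℂ) * W.w s x - ((‖U.w s x‖ ^ 2 : ℝ) : ℂ) * U.w s x)
            * conj (W.w s x - U.w s x))
        - (γ : ℂ) * (∫ x : AddCircle L,
          (W.w s x - U.w s x) * conj (W.w s x - U.w s x))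
        - (μ : ℂ) * (∫ x : AddCircle L,
          lowProj L m (fun y => W.w s y - U.w s y) x * conj (W.w s x - U.w s x)) := by
    have hpt : (fun x : AddCircle L => (W.ws s x - U.ws s x) * conj (W.w s x - U.w s x))
        = fun x : AddCircle L =>
          Complex.I * ((W.wxx s x - U.wxx s x) * conj (W.w s x - U.w s x))
          + Complex.I * ((((‖W.w s x‖ ^ 2 : ℝ) : ℂ) * W.w s x
              - ((‖U.w s x‖ ^ 2 : ℝ) : ℂ) * U.w s x) * conj (W.w s x - U.w s x))
          - (γ : ℂ) * ((W.w s x - U.w s x) * conj (W.w s x - U.w s x))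
          - (μ : ℂ) * (lowProj L m (fun y => W.w s y - U.w s y) x
              * conj (W.w s x - U.w s x)) := by
      funext x
      rw [hDs x]
      ring
    have iAB : Integrable (fun x : AddCircle L =>
        Complex.I * ((W.wxx s x - U.wxx s x) * conj (W.w s x - U.w s x))
          + Complex.I * ((((‖W.w s x‖ ^ 2 : ℝ) : ℂ) * W.w s x
            - ((‖U.w s x‖ ^ 2 : ℝ) : ℂ) * U.w s x) * conj (W.w s x - U.w s x))) volume :=
      iA.add iB
    have iABC : Integrable (fun x : AddCircle L =>
        Complex.I * ((W.wxx s x - U.wxx s x) * conj (W.w s x - U.w s x))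
          + Complex.I * ((((‖W.w s x‖ ^ 2 : ℝ) : ℂ) * W.w s x
            - ((‖U.w s x‖ ^ 2 : ℝ) : ℂ) * U.w s x) * conj (W.w s x - U.w s x))
          - (γ : ℂ) * ((W.w s x - U.w s x) * conj (W.w s x - U.w s x))) volume :=
      iAB.sub iC
    rw [hpt, integral_sub iABC iD, integral_sub iAB iC,
      integral_add iA iB, integral_const_mul, integral_const_mul, integral_const_mul,
      integral_const_mul]
  -- component 1 : integration by parts
  have hZ1 : (∫ x : AddCircle L,
      (W.wxx s x - U.wxx s x) * conj (W.w s x - U.w s x)).im = 0 :=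
    ibp_im (D := fun x => W.w s x - U.w s x) (Dx := fun x => W.wx s x - U.wx s x)
      (Dxx := fun x => W.wxx s x - U.wxx s x)
      (fun t => (W.hwx s t).sub (U.hwx s t))
      (fun t => (W.hwxx s t).sub (U.hwxx s t)) hDc hDxc hDxxc
  -- component 2 : nonlinear term
  have hZ2 : (∫ x : AddCircle L,
        (((‖W.w s x‖ ^ 2 : ℝ) : ℂ) * W.w s x - ((‖U.w s x‖ ^ 2 : ℝ) : ℂ) * U.w s x)
          * conj (W.w s x - U.w s x)).im
      = (∫ x : AddCircle L,
          W.w s x * U.w s x * (conj (W.w s x - U.w s x)) ^ 2).im := by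
    rw [integral_im' (f := fun x => (((‖W.w s x‖ ^ 2 : ℝ) : ℂ) * W.w s x
        - ((‖U.w s x‖ ^ 2 : ℝ) : ℂ) * U.w s x) * conj (W.w s x - U.w s x))
        (myIntegrable (hNc.mul hconjD) _),
      integral_im' (f := fun x => W.w s x * U.w s x * (conj (W.w s x - U.w s x)) ^ 2)
        (myIntegrable (((hcW s).mul (hcU s)).mul (hconjD.pow 2)) _)]
    exact integral_congr_ae (Filter.Eventually.of_forall fun x =>
      nonlin_im (W.w s x) (U.w s x))
  -- component 3
  have hZ3 : (∫ x : AddCircle L, (W.w s x - U.w s x) * conj (W.w s x - U.w s x))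
      = ((∫ x : AddCircle L, ‖W.w s x - U.w s x‖ ^ 2 : ℝ) : ℂ) := by
    simp_rw [mul_conj_self_eq]
    exact integral_ofReal
  -- component 4
  have hZ4 : (∫ x : AddCircle L,
      lowProj L m (fun y => W.w s y - U.w s y) x * conj (W.w s x - U.w s x))
      = ((∫ x : AddCircle L,
          ‖lowProj L m (fun y => W.w s y - U.w s y) x‖ ^ 2 : ℝ) : ℂ) := by
    have e1 := integral_trig_mul_conj (m := m)
      (fun k => fourierCoeff (fun y => W.w s y - U.w s y) k)
      (fun y => W.w s y - U.w s y) hDc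
    have e2 := integral_trig_mul_conj_trig (L := L) (m := m)
      (fun k => fourierCoeff (fun y => W.w s y - U.w s y) k)
      (fun k => fourierCoeff (fun y => W.w s y - U.w s y) k)
    have e3 : (∫ x : AddCircle L,
        lowProj L m (fun y => W.w s y - U.w s y) x
          * conj (lowProj L m (fun y => W.w s y - U.w s y) x))
        = ((∫ x : AddCircle L,
            ‖lowProj L m (fun y => W.w s y - U.w s y) x‖ ^ 2 : ℝ) : ℂ) := by
      simp_rw [mul_conj_self_eq]
      exact integral_ofReal
    calc (∫ x : AddCircle L,
        lowProj L m (fun y => W.w s y - U.w s y) x * conj (W.w s x - U.w s x))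
        = (L : ℂ) * ∑ k ∈ Finset.Icc (-(m : ℤ)) (m : ℤ),
            fourierCoeff (fun y => W.w s y - U.w s y) k
              * conj (fourierCoeff (fun y => W.w s y - U.w s y) k) := e1
      _ = ∫ x : AddCircle L,
            lowProj L m (fun y => W.w s y - U.w s y) x
              * conj (lowProj L m (fun y => W.w s y - U.w s y) x) := e2.symm
      _ = _ := e3
  -- l2norm identities
  have hl1 : l2norm L (fun x => W.w s x - U.w s x) ^ 2
      = ∫ x : AddCircle L, ‖W.w s x - U.w s x‖ ^ 2 := by
    rw [l2norm, Real.sq_sqrt (integral_nonneg fun x => sq_nonneg _)]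
  have hl2 : l2norm L (lowProj L m fun x => W.w s x - U.w s x) ^ 2
      = ∫ x : AddCircle L, ‖lowProj L m (fun y => W.w s y - U.w s y) x‖ ^ 2 := by
    rw [l2norm, Real.sq_sqrt (integral_nonneg fun x => sq_nonneg _)]
  -- assemble
  have hR : (∫ x : AddCircle L,
      2 * ((W.ws s x - U.ws s x) * conj (W.w s x - U.w s x)).re)
      = 2 * (∫ x : AddCircle L, (W.ws s x - U.ws s x) * conj (W.w s x - U.w s x)).re := by
    rw [integral_const_mul, integral_re' (f := fun x => (W.ws s x - U.ws s x) * conj (W.w s x - U.w s x))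
      (myIntegrable (hDsc.mul hconjD) _)]
  rw [hR, hZ]
  rw [hl1, hl2]
  simp only [Complex.add_re, Complex.sub_re, Complex.I_mul_re, Complex.mul_re,
    Complex.I_re, Complex.I_im, Complex.ofReal_re, Complex.ofReal_im, hZ1, hZ2, hZ3, hZ4]
  ring
end
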